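/- Let R be a subring of a commutative ring T with a common ideal C containing a T-regular element, and assume T is flat over R and C is a principal ideal of T. Let I be an ideal of R with IT = T. Then C ⊆ I and IC = C. -/

import Mathlib

/-- condition (FP), and `I` an ideal of `R` with `IT = T`.
Then `C ⊆ I` and `IC = C` (viewing `C` as the ideal of `R` it determines). -/
theorem stmt_3 (T : Type*) [CommRing T] (R : Subring T) (C : Ideal T)
    (hCR : (C : Set T) ⊆ (R : Set T))
    (hreg : ∃ c ∈ C, c ∈ nonZeroDivisors T)
    (hflat : Module.Flat ↥R T) (hprin : C.IsPrincipal)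
    (I : Ideal ↥R) (hIT : Ideal.map (algebraMap ↥R T) I = ⊤) :
    Ideal.comap (algebraMap ↥R T) C ≤ I ∧
      I * Ideal.comap (algebraMap ↥R T) C = Ideal.comap (algebraMap ↥R T) C := by
  set C' := Ideal.comap (algebraMap ↥R T) C with hC'
  have key : ∀ t ∈ Ideal.map (algebraMap ↥R T) I,
      ∀ x : ↥R, (x : T) ∈ C → ∃ y ∈ I * C', (y : T) = t * (x : T) := by
    intro t ht
    rw [Ideal.map] at ht
    refine Submodule.span_induction ?_ ?_ ?_ ?_ ht
    · rintro _ ⟨b, hb, rfl⟩ x hx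
      exact ⟨b * x, Ideal.mul_mem_mul hb hx, rfl⟩
    · intro x hx
      exact ⟨0, zero_mem _, by simp⟩
    · rintro t₁ t₂ _ _ h₁ h₂ x hx
      obtain ⟨y₁, hy₁, e₁⟩ := h₁ x hx
      obtain ⟨y₂, hy₂, e₂⟩ := h₂ x hx
      exact ⟨y₁ + y₂, add_mem hy₁ hy₂, by push_cast [e₁, e₂]; ring⟩
    · rintro r t _ h x hx
      have hrx : r * (x : T) ∈ C := C.mul_mem_left r hx
      obtain ⟨y, hy, e⟩ := h ⟨r * (x : T), hCR hrx⟩ hrx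
      exact ⟨y, hy, by rw [e]; simp [smul_eq_mul]; ring⟩
  have hle : C' ≤ I * C' := by
    intro x hx
    have h1 : (1 : T) ∈ Ideal.map (algebraMap ↥R T) I := by rw [hIT]; trivial
    obtain ⟨y, hy, e⟩ := key 1 h1 x hx
    have : y = x := Subtype.ext (by simpa using e)
    exact this ▸ hy
  have heq : I * C' = C' := le_antisymm Ideal.mul_le_right hle
  exact ⟨heq ▸ hle.trans Ideal.mul_le_left, heq⟩
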